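/- Let P be a row-stochastic matrix on a finite state space V, and for each vertex v let σ_v : ℕ → N(v) be the SRT-router sequence defined inductively by: T_i(v) = {u ∈ N(v) : |{j < i : σ_v(j) = u}| − (i+1)·P_{v,u} < 0}, and σ_v(i) is the element u* ∈ T_i(v) minimizing (|{j < i : σ_v(j) = u}| + 1)/P_{v,u} (ties broken by a fixed order). Then for every u, v ∈ V and every integer z > 0, we have | |{j ∈ [0, z) : σ_v(j) = u}| − z·P_{v,u} | < 1. -/

import Mathlib

open Finset

section SRTAux

variable {V : Type*} [Fintype V] [DecidableEq V]

/-- number of times `σ v` hits `w` before time `i` -/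
def cnt (σ : V → ℕ → V) (v w : V) (i : ℕ) : ℕ :=
  ((range i).filter (fun j => σ v j = w)).card

lemma cnt_succ (σ : V → ℕ → V) (v w : V) (i : ℕ) :
    cnt σ v w (i + 1) = cnt σ v w i + if σ v i = w then 1 else 0 := by
  unfold cnt
  rw [range_add_one, filter_insert]
  split
  · rw [card_insert_of_notMem (by simp)]
  · simp

lemma cnt_mono (σ : V → ℕ → V) (v w : V) {i j : ℕ} (h : i ≤ j) :
    cnt σ v w i ≤ cnt σ v w j :=
  card_le_card (filter_subset_filter _ (range_subset_range.2 h))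

/-- number of hits in the window `[m, z)` -/
def kcnt (σ : V → ℕ → V) (v w : V) (m z : ℕ) : ℕ :=
  ((Ico m z).filter (fun j => σ v j = w)).card

lemma cnt_decomp (σ : V → ℕ → V) (v w : V) {m z : ℕ} (h : m ≤ z) :
    cnt σ v w z = cnt σ v w m + kcnt σ v w m z := by
  unfold cnt kcnt
  rw [range_eq_Ico, ← Finset.Ico_union_Ico_eq_Ico (Nat.zero_le m) h, filter_union,
    card_union_of_disjoint (disjoint_filter_filter (Ico_disjoint_Ico_consecutive 0 m z)),
    ← range_eq_Ico]

/-- the key counting contradiction -/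
lemma counting (P : Matrix V V ℝ) (hP0 : ∀ u w, 0 ≤ P u w) (hP1 : ∀ u, ∑ w, P u w = 1)
    (σ : V → ℕ → V) (v u : V) (z m : ℕ)
    (hpu : 0 < P v u) (hmz : m < z)
    (hu : (cnt σ v u z : ℝ) + 1 ≤ z * P v u)
    (hstar : ∀ i, m ≤ i → i < z → (cnt σ v (σ v i) i : ℝ) + 1 ≤ z * P v (σ v i))
    (HB : ∀ w i, m ≤ i → i < z → σ v i = w → (m : ℝ) * P v w ≤ (cnt σ v w m : ℝ)) :
    False := by
  have hmzR : (m : ℝ) + 1 ≤ z := by exact_mod_cast hmz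
  -- the sum of window counts is z - m
  have hsumN : ∑ w, kcnt σ v w m z = z - m := by
    have h := Finset.card_eq_sum_card_fiberwise
      (f := σ v) (s := Ico m z) (t := univ) (fun x _ => mem_univ _)
    rw [Nat.card_Ico] at h
    exact h.symm
  have hsumR : ∑ w, (kcnt σ v w m z : ℝ) = (z : ℝ) - m := by
    rw [← Nat.cast_sum, hsumN, Nat.cast_sub hmz.le]
  -- bounds via the last hit of each w in the window
  have hlast : ∀ w, 0 < kcnt σ v w m z →
      (cnt σ v w z : ℝ) ≤ z * P v w ∧ (m : ℝ) * P v w ≤ (cnt σ v w m : ℝ) := by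
    intro w hw
    have hne : ((Ico m z).filter (fun j => σ v j = w)).Nonempty := card_pos.1 hw
    set j := ((Ico m z).filter (fun j => σ v j = w)).max' hne with hjdef
    have hjmem := max'_mem _ hne
    rw [mem_filter, mem_Ico] at hjmem
    obtain ⟨⟨hmj, hjz⟩, hjw⟩ := hjmem
    have hfil : (range z).filter (fun l => σ v l = w) =
        (range (j + 1)).filter (fun l => σ v l = w) := by
      apply Finset.ext; intro l
      simp only [mem_filter, mem_range]
      constructor
      · rintro ⟨hlz, hlw⟩
        refine ⟨?_, hlw⟩
        by_contra hl
        push_neg at hl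
        have hlmem : l ∈ (Ico m z).filter (fun j => σ v j = w) := by
          rw [mem_filter, mem_Ico]
          exact ⟨⟨le_trans hmj (by omega), hlz⟩, hlw⟩
        have := le_max' _ l hlmem
        omega
      · rintro ⟨hlj, hlw⟩
        exact ⟨by omega, hlw⟩
    have hcz : cnt σ v w z = cnt σ v w j + 1 := by
      unfold cnt
      rw [hfil]
      have := cnt_succ σ v w j
      rw [if_pos hjw] at this
      exact this
    have hs := hstar j hmj hjz
    rw [hjw] at hs
    constructor
    · rw [hcz]; push_cast; linarith
    · exact HB w j hmj hjz hjw
  -- per-vertex bound on window counts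
  have hkb : ∀ w, (kcnt σ v w m z : ℝ) ≤ ((z : ℝ) - m) * P v w := by
    intro w
    rcases Nat.eq_zero_or_pos (kcnt σ v w m z) with h | h
    · rw [h]
      push_cast
      have := hP0 v w
      nlinarith
    · obtain ⟨h1, h2⟩ := hlast w h
      have hd := cnt_decomp σ v w hmz.le
      have : (cnt σ v w z : ℝ) = (cnt σ v w m : ℝ) + kcnt σ v w m z := by
        exact_mod_cast congrArg (Nat.cast : ℕ → ℝ) hd
      nlinarith
  -- put the sums together
  have h4 : (kcnt σ v u m z : ℝ) + ∑ w ∈ univ.erase u, (kcnt σ v w m z : ℝ)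
      = ∑ w, (kcnt σ v w m z : ℝ) :=
    Finset.add_sum_erase univ (fun w => (kcnt σ v w m z : ℝ)) (mem_univ u)
  have h2 : ∑ w ∈ univ.erase u, (kcnt σ v w m z : ℝ)
      ≤ ∑ w ∈ univ.erase u, ((z : ℝ) - m) * P v w :=
    Finset.sum_le_sum (fun w _ => hkb w)
  have h3 : ∑ w ∈ univ.erase u, ((z : ℝ) - m) * P v w = ((z : ℝ) - m) * (1 - P v u) := by
    rw [← mul_sum, Finset.sum_erase_eq_sub (mem_univ u), hP1 v]
  rcases Nat.eq_zero_or_pos (kcnt σ v u m z) with h0 | h0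
  · rw [h0] at h4
    push_cast at h4
    have hpos : 0 < ((z : ℝ) - m) * P v u := mul_pos (by linarith) hpu
    nlinarith
  · have hku : (kcnt σ v u m z : ℝ) ≤ ((z : ℝ) - m) * P v u - 1 := by
      obtain ⟨_, h2'⟩ := hlast u h0
      have hd := cnt_decomp σ v u hmz.le
      have : (cnt σ v u z : ℝ) = (cnt σ v u m : ℝ) + kcnt σ v u m z := by
        exact_mod_cast congrArg (Nat.cast : ℕ → ℝ) hd
      nlinarith
    nlinarith

end SRTAux

/-- Proposition 1 (low-discrepancy property of the SRT-router sequence):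
for any row-stochastic `P` and any greedy SRT-router sequence `σ`,
`| |{j < z : σ_v(j) = u}| - z·P_{v,u} | < 1` for all `u, v` and `z > 0`. -/
theorem srt_low_discrepancy {V : Type*} [Fintype V] [DecidableEq V]
    (P : Matrix V V ℝ)
    (hP0 : ∀ u v, 0 ≤ P u v) (hP1 : ∀ u, ∑ v, P u v = 1)
    (σ : V → ℕ → V)
    -- `σ v i` belongs to `T_i(v)` (in particular it is a neighbour of `v`)
    (hmem : ∀ v i, 0 < P v (σ v i) ∧
      (((range i).filter (fun j => σ v j = σ v i)).card : ℝ) - (i + 1 : ℝ) * P v (σ v i) < 0)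
    -- `σ v i` minimizes `(|{j < i : σ_v(j) = u}| + 1) / P_{v,u}` over `u ∈ T_i(v)`
    (hmin : ∀ v i u, 0 < P v u →
      (((range i).filter (fun j => σ v j = u)).card : ℝ) - (i + 1 : ℝ) * P v u < 0 →
      ((((range i).filter (fun j => σ v j = σ v i)).card : ℝ) + 1) / P v (σ v i) ≤
        ((((range i).filter (fun j => σ v j = u)).card : ℝ) + 1) / P v u)
    (v u : V) (z : ℕ) (hz : 0 < z) :
    |(((range z).filter (fun j => σ v j = u)).card : ℝ) - (z : ℝ) * P v u| < 1 := by
  have hmem' : ∀ (v' : V) (i : ℕ), 0 < P v' (σ v' i) ∧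
      (cnt σ v' (σ v' i) i : ℝ) - ((i : ℝ) + 1) * P v' (σ v' i) < 0 := hmem
  have hmin' : ∀ (v' : V) (i : ℕ) (w : V), 0 < P v' w →
      (cnt σ v' w i : ℝ) - ((i : ℝ) + 1) * P v' w < 0 →
      ((cnt σ v' (σ v' i) i : ℝ) + 1) / P v' (σ v' i) ≤ ((cnt σ v' w i : ℝ) + 1) / P v' w := hmin
  -- upper bound by induction
  have upper : ∀ (w : V) (i : ℕ), (cnt σ v w i : ℝ) < i * P v w + 1 := by
    intro w i
    induction i with
    | zero => simp [cnt]
    | succ n ih =>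
      rw [cnt_succ]
      by_cases h : σ v n = w
      · have h2 := (hmem' v n).2
        rw [h] at h2
        rw [if_pos h]
        push_cast
        linarith
      · rw [if_neg h]
        have := hP0 v w
        push_cast
        linarith
  show |(cnt σ v u z : ℝ) - (z : ℝ) * P v u| < 1
  rw [abs_lt]
  constructor
  · -- lower bound : the hard direction
    by_contra hcon
    push_neg at hcon
    have hu : (cnt σ v u z : ℝ) + 1 ≤ z * P v u := by linarith
    have hpu : 0 < P v u := by
      rcases (hP0 v u).lt_or_eq with h | h
      · exact h
      · exfalso
        rw [← h, mul_zero] at hu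
        have : (0 : ℝ) ≤ (cnt σ v u z : ℝ) := Nat.cast_nonneg _
        linarith
    have claim : ∀ m, m < z →
        (∀ i, m ≤ i → i < z → (cnt σ v (σ v i) i : ℝ) + 1 ≤ z * P v (σ v i)) → False := by
      intro m
      induction m with
      | zero =>
        intro h0z hstar
        exact counting P hP0 hP1 σ v u z 0 hpu h0z hu hstar
          (by intro w i _ _ _; simp [cnt])
      | succ n ih =>
        intro hnz hstar
        by_cases hb : (cnt σ v (σ v n) n : ℝ) + 1 ≤ z * P v (σ v n)
        · refine ih (by omega) ?_
          intro i hi hiz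
          rcases eq_or_lt_of_le hi with h | h
          · rw [← h]; exact hb
          · exact hstar i h hiz
        · push_neg at hb
          refine counting P hP0 hP1 σ v u z (n + 1) hpu hnz hu hstar ?_
          -- the HB property from badness at time n
          intro w i hi hiz hiw
          have hne : ((Ico (n + 1) z).filter (fun j => σ v j = w)).Nonempty := by
            refine ⟨i, ?_⟩
            rw [mem_filter, mem_Ico]
            exact ⟨⟨hi, hiz⟩, hiw⟩
          set j := ((Ico (n + 1) z).filter (fun j => σ v j = w)).min' hne with hjdef
          have hjmem := min'_mem _ hne
          rw [mem_filter, mem_Ico] at hjmem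
          obtain ⟨⟨hnj, hjz⟩, hjw⟩ := hjmem
          have hpw : 0 < P v w := by
            have := (hmem' v j).1
            rwa [hjw] at this
          -- count of w is unchanged between n+1 and j
          have hjc : cnt σ v w j = cnt σ v w (n + 1) := by
            unfold cnt
            congr 1
            apply Finset.ext; intro l
            simp only [mem_filter, mem_range]
            constructor
            · rintro ⟨hlj, hlw⟩
              refine ⟨?_, hlw⟩
              by_contra hl
              push_neg at hl
              have hlmem : l ∈ (Ico (n + 1) z).filter (fun j => σ v j = w) := by
                rw [mem_filter, mem_Ico]
                exact ⟨⟨hl, by omega⟩, hlw⟩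
              have := Finset.min'_le _ l hlmem
              omega
            · rintro ⟨hln, hlw⟩
              exact ⟨by omega, hlw⟩
          have hA : (cnt σ v w (n + 1) : ℝ) + 1 ≤ z * P v w := by
            have hs := hstar j hnj hjz
            rw [hjw, hjc] at hs
            exact hs
          have hps : 0 < P v (σ v n) := (hmem' v n).1
          by_cases hws : σ v n = w
          · -- impossible: w = σ v n
            exfalso
            have hc1 : cnt σ v w (n + 1) = cnt σ v w n + 1 := by
              have := cnt_succ σ v w n
              rw [if_pos hws] at this
              exact this
            rw [hws] at hb
            rw [hc1] at hA
            push_cast at hA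
            linarith
          · have hc1 : cnt σ v w (n + 1) = cnt σ v w n := by
              have := cnt_succ σ v w n
              rw [if_neg hws] at this
              simpa using this
            by_contra hcon2
            push_neg at hcon2
            have helig : (cnt σ v w n : ℝ) - ((n : ℝ) + 1) * P v w < 0 := by
              rw [← hc1]
              push_cast at hcon2
              linarith
            have hm := hmin' v n w hpw helig
            have hr : ((cnt σ v w n : ℝ) + 1) / P v w ≤ z := by
              rw [div_le_iff₀ hpw]
              rw [hc1] at hA
              linarith
            have hl : (z : ℝ) < ((cnt σ v (σ v n) n : ℝ) + 1) / P v (σ v n) := by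
              rw [lt_div_iff₀ hps]
              linarith
            linarith
    -- seed: the star property holds at z - 1
    refine claim (z - 1) (by omega) ?_
    intro i hi hiz
    have hieq : i = z - 1 := by omega
    subst hieq
    have hcast : ((z - 1 : ℕ) : ℝ) + 1 = z := by
      rw [Nat.cast_sub hz]
      ring
    have hmono : (cnt σ v u (z - 1) : ℝ) ≤ (cnt σ v u z : ℝ) := by
      exact_mod_cast cnt_mono σ v u (Nat.sub_le z 1)
    have helig : (cnt σ v u (z - 1) : ℝ) - (((z - 1 : ℕ) : ℝ) + 1) * P v u < 0 := by
      rw [hcast]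
      linarith
    have hm := hmin' v (z - 1) u hpu helig
    have hr : ((cnt σ v u (z - 1) : ℝ) + 1) / P v u ≤ z := by
      rw [div_le_iff₀ hpu]
      linarith
    have hps : 0 < P v (σ v (z - 1)) := (hmem' v (z - 1)).1
    have := (div_le_iff₀ hps).1 (hm.trans hr)
    linarith
  · have := upper u z
    linarith
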